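/- There exists a 3-regular almost self-centered graph of order 12. -/

import Mathlib

open SimpleGraph

/-- The eccentricity of a vertex `v`: the maximum distance from `v` to any vertex. -/
noncomputable def graphEcc {V : Type*} [Fintype V] (G : SimpleGraph V) (v : V) : ℕ :=
  Finset.univ.sup fun u => G.dist v u

/-- The radius of a graph: the minimum eccentricity over all vertices. -/
noncomputable def graphRadius {V : Type*} [Fintype V] (G : SimpleGraph V) : ℕ :=
  sInf (Set.range (graphEcc G))

/-- The diameter of a graph: the maximum eccentricity over all vertices. -/
noncomputable def graphDiam {V : Type*} [Fintype V] (G : SimpleGraph V) : ℕ :=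
  Finset.univ.sup (graphEcc G)

/-- A connected graph of order `n` is almost self-centered if it has exactly `n - 2`
central vertices (vertices whose eccentricity equals the radius). -/
def IsAlmostSelfCentered {V : Type*} [Fintype V] (G : SimpleGraph V) : Prop :=
  G.Connected ∧ Nat.card {v : V | graphEcc G v = graphRadius G} = Fintype.card V - 2

/-- A connected graph of order `n` is almost peripheral if it has exactly `n - 1`
peripheral vertices (vertices whose eccentricity equals the diameter). -/
def IsAlmostPeripheral {V : Type*} [Fintype V] (G : SimpleGraph V) : Prop :=
  G.Connected ∧ Nat.card {v : V | graphEcc G v = graphDiam G} = Fintype.card V - 1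

/-- A graph is `k`-regular if every vertex has degree `k`. -/
def IsKRegular {V : Type*} (G : SimpleGraph V) (k : ℕ) : Prop :=
  ∀ v : V, (G.neighborSet v).ncard = k


def nbrs : Fin 12 → List (Fin 12) :=
  ![[3,4,7],[3,10,11],[7,9,11],[0,1,6],[0,5,8],[4,6,8],
    [3,5,9],[0,2,11],[4,5,10],[2,6,10],[1,8,9],[1,2,7]]

def myG : SimpleGraph (Fin 12) where
  Adj v w := w ∈ nbrs v
  symm := by constructor; intro v w; revert v w; decide
  loopless := by constructor; intro v; revert v; decide

instance : DecidableRel myG.Adj := fun v w => inferInstanceAs (Decidable (w ∈ nbrs v))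

def withinB : ℕ → Fin 12 → Fin 12 → Bool
  | 0, v, u => v == u
  | n+1, v, u => v == u || (nbrs v).any fun w => withinB n w u

lemma withinB_iff (n : ℕ) (v u : Fin 12) :
    withinB n v u = true ↔ ∃ p : myG.Walk v u, p.length ≤ n := by
  induction n generalizing v with
  | zero =>
    simp only [withinB, beq_iff_eq]
    constructor
    · rintro rfl; exact ⟨.nil, by simp⟩
    · rintro ⟨p, hp⟩
      exact (SimpleGraph.Walk.eq_of_length_eq_zero (Nat.le_zero.mp hp)).symm ▸ rfl
  | succ n ih =>
    simp only [withinB, Bool.or_eq_true, beq_iff_eq, List.any_eq_true]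
    constructor
    · rintro (rfl | ⟨w, hw, hwin⟩)
      · exact ⟨.nil, by simp⟩
      · obtain ⟨p, hp⟩ := (ih w).mp hwin
        exact ⟨.cons hw p, Nat.succ_le_succ hp⟩
    · rintro ⟨p, hp⟩
      cases p with
      | nil => exact Or.inl rfl
      | cons h q =>
        refine Or.inr ⟨_, h, (ih _).mpr ⟨q, ?_⟩⟩
        simpa using Nat.succ_le_succ_iff.mp (by simpa using hp)

lemma reach (v u : Fin 12) : myG.Reachable v u := by
  have h : withinB 4 v u = true := by revert v u; decide
  obtain ⟨p, _⟩ := (withinB_iff 4 v u).mp h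
  exact ⟨p⟩

lemma dist_le_of (n : ℕ) (v u : Fin 12) (h : withinB n v u = true) : myG.dist v u ≤ n := by
  obtain ⟨p, hp⟩ := (withinB_iff n v u).mp h
  exact (SimpleGraph.dist_le p).trans hp

lemma lt_dist_of (n : ℕ) (v u : Fin 12) (h : withinB n v u = false) : n < myG.dist v u := by
  by_contra hle
  push_neg at hle
  obtain ⟨p, hp⟩ := (reach v u).exists_walk_length_eq_dist
  have := (withinB_iff n v u).mpr ⟨p, hp.le.trans hle⟩
  simp [h] at this

lemma ecc_le (n : ℕ) (v : Fin 12) (h : ∀ u, withinB n v u = true) : graphEcc myG v ≤ n :=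
  Finset.sup_le fun u _ => dist_le_of n v u (h u)

lemma ecc_ge (n : ℕ) (v u : Fin 12) (h : withinB (n-1) v u = false) (hn : 1 ≤ n) :
    n ≤ graphEcc myG v := by
  have := lt_dist_of (n-1) v u h
  calc n = (n-1) + 1 := (Nat.succ_pred_eq_of_pos hn).symm
  _ ≤ myG.dist v u := this
  _ ≤ graphEcc myG v := Finset.le_sup (Finset.mem_univ u)

lemma ecc_vals : ∀ v : Fin 12, graphEcc myG v = if v = 5 ∨ v = 11 then 4 else 3 := by
  intro v
  fin_cases v
  · exact le_antisymm (ecc_le 3 0 (by decide)) (ecc_ge 3 0 9 (by decide) (by norm_num))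
  · exact le_antisymm (ecc_le 3 1 (by decide)) (ecc_ge 3 1 4 (by decide) (by norm_num))
  · exact le_antisymm (ecc_le 3 2 (by decide)) (ecc_ge 3 2 3 (by decide) (by norm_num))
  · exact le_antisymm (ecc_le 3 3 (by decide)) (ecc_ge 3 3 2 (by decide) (by norm_num))
  · exact le_antisymm (ecc_le 3 4 (by decide)) (ecc_ge 3 4 1 (by decide) (by norm_num))
  · exact le_antisymm (ecc_le 4 5 (by decide)) (ecc_ge 4 5 11 (by decide) (by norm_num))
  · exact le_antisymm (ecc_le 3 6 (by decide)) (ecc_ge 3 6 7 (by decide) (by norm_num))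
  · exact le_antisymm (ecc_le 3 7 (by decide)) (ecc_ge 3 7 5 (by decide) (by norm_num))
  · exact le_antisymm (ecc_le 3 8 (by decide)) (ecc_ge 3 8 2 (by decide) (by norm_num))
  · exact le_antisymm (ecc_le 3 9 (by decide)) (ecc_ge 3 9 0 (by decide) (by norm_num))
  · exact le_antisymm (ecc_le 3 10 (by decide)) (ecc_ge 3 10 0 (by decide) (by norm_num))
  · exact le_antisymm (ecc_le 4 11 (by decide)) (ecc_ge 4 11 5 (by decide) (by norm_num))

lemma radius_eq : graphRadius myG = 3 := by
  have h0 : graphEcc myG 0 = 3 := by simpa using ecc_vals 0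
  apply le_antisymm
  · exact Nat.sInf_le ⟨0, h0⟩
  · obtain ⟨w, hw⟩ := Nat.sInf_mem (⟨3, 0, h0⟩ : (Set.range (graphEcc myG)).Nonempty)
    rw [graphRadius, ← hw, ecc_vals w]
    split <;> norm_num

theorem exists_cubic_almostSelfCentered_order_twelve :
    ∃ G : SimpleGraph (Fin 12), IsKRegular G 3 ∧ IsAlmostSelfCentered G := by
  refine ⟨myG, ?_, ?_, ?_⟩
  · intro v
    rw [Set.ncard_eq_toFinset_card', Set.toFinset_card]
    revert v; decide
  · have hp : myG.Preconnected := fun v u => reach v u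
    exact ⟨hp⟩
  · have : {v : Fin 12 | graphEcc myG v = graphRadius myG} =
        ↑({0,1,2,3,4,6,7,8,9,10} : Finset (Fin 12)) := by
      ext v
      simp only [Set.mem_setOf_eq, radius_eq, ecc_vals v, Finset.coe_insert, Set.mem_insert_iff,
        Finset.coe_singleton, Set.mem_singleton_iff]
      fin_cases v <;> simp
    rw [this, Nat.card_coe_set_eq, Set.ncard_coe_finset]
    decide
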